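/- arXiv:2309.01827 — 9 statements merged into one kernel-verified Lean document; each statement's English description precedes it below -/
import Mathlib

section
/- Assume additionally f(0) = 0 and fix L ∈ ℝ^d. For each S > 0 let Z^{(S)} : [0,S] → ℝ^d be a continuous function satisfying Z^{(S)}_0 = 0 and Z^{(S)}_t = ∫₀ᵗ ( f(Z^{(S)}_u) + S^{-1} L ) du for all t ∈ [0,S]. Then lim_{T→0⁺} sup_{0 < S ≤ T} sup_{0 ≤ t ≤ S} ‖Z^{(S)}_t − t S^{-1} Z^{(S)}_S‖ = 0; that is, as T → 0⁺ these trajectories become uniformly close to straight lines. -/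
open Filter

/-- Short-time trajectories of `dZ/dt = f(Z) + L/S` are asymptotically
straight lines. Assuming `f 0 = 0`, for each `S > 0` let `Z S : [0,S] → ℝ^d` be continuous
with `Z S 0 = 0` and `Z S t = ∫₀ᵗ (f (Z S u) + S⁻¹ • L) du` on `[0,S]`. Then
`sup_{0 < S ≤ T} sup_{0 ≤ t ≤ S} ‖Z S t − (t/S) • Z S S‖ → 0` as `T → 0⁺`. -/
theorem stmt2 (d : ℕ) (hd : 0 < d)
    (f : EuclideanSpace ℝ (Fin d) → EuclideanSpace ℝ (Fin d))
    (Cf : ℝ) (hCf : 0 < Cf)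
    (hf : ∀ x y : EuclideanSpace ℝ (Fin d), ‖f x - f y‖ ≤ Cf * ‖x - y‖)
    (hf0 : f 0 = 0)
    (L : EuclideanSpace ℝ (Fin d))
    (Z : ℝ → ℝ → EuclideanSpace ℝ (Fin d))
    (hZcont : ∀ S : ℝ, 0 < S → ContinuousOn (Z S) (Set.Icc 0 S))
    (hZ0 : ∀ S : ℝ, 0 < S → Z S 0 = 0)
    (hZeq : ∀ S : ℝ, 0 < S → ∀ t ∈ Set.Icc (0:ℝ) S,
      Z S t = ∫ u in (0:ℝ)..t, (f (Z S u) + S⁻¹ • L)) :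
    Tendsto (fun T : ℝ =>
        ⨆ S : {S : ℝ // 0 < S ∧ S ≤ T}, ⨆ t : Set.Icc (0:ℝ) S.1,
          ‖Z S.1 t - ((t : ℝ) / S.1) • Z S.1 S.1‖)
      (nhdsWithin 0 (Set.Ioi 0)) (nhds 0) := by
  have hfc : Continuous f := by
    have : LipschitzWith ⟨Cf, hCf.le⟩ f :=
      LipschitzWith.of_dist_le_mul (fun x y => by
        rw [dist_eq_norm, dist_eq_norm]; exact hf x y)
    exact this.continuous
  have hfb : ∀ x : EuclideanSpace ℝ (Fin d), ‖f x‖ ≤ Cf * ‖x‖ := by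
    intro x
    have := hf x 0
    simpa [hf0] using this
  -- key pointwise bound
  have key : ∀ S : ℝ, 0 < S → Cf * S ≤ 1/2 → ∀ t ∈ Set.Icc (0:ℝ) S,
      ‖Z S t - (t / S) • Z S S‖ ≤ 4 * Cf * ‖L‖ * S := by
    intro S hS hS2 t ht
    obtain ⟨ht0, htS⟩ := ht
    have hcZ : ContinuousOn (fun u => ‖Z S u‖) (Set.Icc 0 S) :=
      (hZcont S hS).norm
    obtain ⟨t₀, ht₀mem, ht₀max⟩ :=
      (isCompact_Icc).exists_isMaxOn (Set.nonempty_Icc.2 hS.le) hcZ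
    set M := ‖Z S t₀‖ with hM
    have hMnn : 0 ≤ M := norm_nonneg _
    have hMb : ∀ u ∈ Set.Icc (0:ℝ) S, ‖Z S u‖ ≤ M := fun u hu => ht₀max hu
    have hgc : ContinuousOn (fun u => f (Z S u)) (Set.Icc 0 S) :=
      hfc.comp_continuousOn (hZcont S hS)
    -- integrability on subintervals
    have hint : ∀ s ∈ Set.Icc (0:ℝ) S,
        IntervalIntegrable (fun u => f (Z S u)) MeasureTheory.volume 0 s := by
      intro s hs
      apply (hgc.mono ?_).intervalIntegrable
      rw [Set.uIcc_of_le hs.1]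
      exact Set.Icc_subset_Icc le_rfl hs.2
    have hfbM : ∀ u ∈ Set.Icc (0:ℝ) S, ‖f (Z S u)‖ ≤ Cf * M := by
      intro u hu
      exact (hfb _).trans (by gcongr; exact hMb u hu)
    have hAnorm : ∀ s ∈ Set.Icc (0:ℝ) S,
        ‖∫ u in (0:ℝ)..s, f (Z S u)‖ ≤ Cf * M * s := by
      intro s hs
      have := intervalIntegral.norm_integral_le_of_norm_le_const
        (a := (0:ℝ)) (b := s) (C := Cf * M) (f := fun u => f (Z S u))
        (fun u hu => by
          rw [Set.uIoc_of_le hs.1] at hu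
          exact hfbM u ⟨hu.1.le, hu.2.trans hs.2⟩)
      simpa [abs_of_nonneg hs.1] using this
    -- split the integral formula
    have hsplit : ∀ s ∈ Set.Icc (0:ℝ) S,
        Z S s = (∫ u in (0:ℝ)..s, f (Z S u)) + (s / S) • L := by
      intro s hs
      rw [hZeq S hS s hs,
        intervalIntegral.integral_add (hint s hs) intervalIntegrable_const,
        intervalIntegral.integral_const, smul_smul]
      ring_nf
    -- bound M
    have hMle : M ≤ 2 * ‖L‖ := by
      have h1 : M ≤ Cf * M * t₀ + (t₀ / S) * ‖L‖ := by
        calc M = ‖(∫ u in (0:ℝ)..t₀, f (Z S u)) + (t₀ / S) • L‖ := by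
              rw [hM, hsplit t₀ ht₀mem]
          _ ≤ ‖∫ u in (0:ℝ)..t₀, f (Z S u)‖ + ‖(t₀ / S) • L‖ := norm_add_le _ _
          _ ≤ Cf * M * t₀ + (t₀ / S) * ‖L‖ := by
              gcongr
              · exact hAnorm t₀ ht₀mem
              · rw [norm_smul, Real.norm_eq_abs,
                  abs_of_nonneg (div_nonneg ht₀mem.1 hS.le)]
      have ht₀S : t₀ ≤ S := ht₀mem.2
      have hdiv : t₀ / S ≤ 1 := (div_le_one hS).2 ht₀S
      have h2 : Cf * M * t₀ ≤ (1/2) * M := by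
        have : Cf * t₀ ≤ 1/2 := le_trans (by nlinarith [ht₀mem.1]) hS2
        nlinarith
      nlinarith [norm_nonneg L]
    -- final bound
    have hZt := hsplit t ⟨ht0, htS⟩
    have hZS := hsplit S ⟨hS.le, le_rfl⟩
    rw [div_self hS.ne'] at hZS
    have hdec : Z S t - (t / S) • Z S S
        = (∫ u in (0:ℝ)..t, f (Z S u)) - (t / S) • (∫ u in (0:ℝ)..S, f (Z S u)) := by
      rw [hZt, hZS]
      module
    have hdivt : t / S ≤ 1 := (div_le_one hS).2 htS
    have hdivt0 : 0 ≤ t / S := div_nonneg ht0 hS.le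
    calc ‖Z S t - (t / S) • Z S S‖
        ≤ ‖∫ u in (0:ℝ)..t, f (Z S u)‖ + (t/S) * ‖∫ u in (0:ℝ)..S, f (Z S u)‖ := by
          rw [hdec]
          refine (norm_sub_le _ _).trans ?_
          rw [norm_smul, Real.norm_eq_abs, abs_of_nonneg hdivt0]
      _ ≤ Cf * M * t + 1 * (Cf * M * S) := by
          gcongr
          · exact hAnorm t ⟨ht0, htS⟩
          · exact hAnorm S ⟨hS.le, le_rfl⟩
      _ ≤ Cf * (2 * ‖L‖) * S + 1 * (Cf * (2 * ‖L‖) * S) := by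
          gcongr <;> first | exact hMle | exact htS
      _ = 4 * Cf * ‖L‖ * S := by ring
  -- squeeze
  have hT₀ : (0:ℝ) < (2 * Cf)⁻¹ := by positivity
  apply squeeze_zero' (g := fun T => 4 * Cf * ‖L‖ * T)
  · filter_upwards [self_mem_nhdsWithin] with T hT
    have hTpos : (0:ℝ) < T := hT
    exact Real.iSup_nonneg fun S => Real.iSup_nonneg fun t => norm_nonneg _
  · filter_upwards [Ioo_mem_nhdsGT_of_mem (Set.mem_Ico.2 ⟨le_rfl, hT₀⟩)] with T hT
    obtain ⟨hT0, hT1⟩ := hT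
    have hb : (0:ℝ) ≤ 4 * Cf * ‖L‖ * T := by positivity
    refine Real.iSup_le (fun S => Real.iSup_le (fun t => ?_) hb) hb
    obtain ⟨S, hS0, hST⟩ := S
    have hCfS : Cf * S ≤ 1/2 := by
      have : S < (2*Cf)⁻¹ := lt_of_le_of_lt hST hT1
      have h2 : S * (2 * Cf) < 1 := by
        rw [← lt_div_iff₀ (by positivity : (0:ℝ) < 2 * Cf)]
        simpa [one_div] using this
      nlinarith
    have := key S hS0 hCfS t t.2
    refine this.trans ?_
    gcongr
  · have hc : Continuous (fun T : ℝ => 4 * Cf * ‖L‖ * T) := by continuity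
    exact (hc.tendsto' 0 0 (by simp)).mono_left nhdsWithin_le_nhds
end

section
/- Let 0 ≤ b and V > 0 with b + ζ/2 < V for some ζ ∈ (0,1), and let 0 < δ < ζ/8. For ε > 0 set p_ε = exp(−(V+δ)/ε), q_ε = exp(−(V−δ)/ε), and I_ε = { j ∈ ℤ, j ≥ 1 : ε log j ∈ [b − ζ/4, b + ζ/4] }. Then for all sufficiently small ε > 0: Σ_{j ∈ I_ε} q_ε (1 − p_ε)^{j−1} ≤ exp( (b − V + ζ/2)/ε ) and Σ_{j ∈ I_ε} p_ε (1 − q_ε)^{j−1} ≥ exp( (b − V − ζ/2)/ε ). -/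
private lemma exp_div_mul (x y ε : ℝ) :
    Real.exp (x / ε) * Real.exp (y / ε) = Real.exp ((x + y) / ε) := by
  rw [← Real.exp_add, ← add_div]

set_option maxHeartbeats 1000000 in
/-- Geometric-sum estimates for the number of excursions.
Let `0 ≤ b`, `V > 0`, `ζ ∈ (0,1)` with `b + ζ/2 < V`, and `0 < δ < ζ/8`. Set
`p_ε = exp(−(V+δ)/ε)`, `q_ε = exp(−(V−δ)/ε)` and
`I_ε = { j ≥ 1 : ε log j ∈ [b − ζ/4, b + ζ/4] }`. Then for all small enough `ε > 0`:
`Σ_{j∈I_ε} q_ε (1−p_ε)^{j−1} ≤ exp((b−V+ζ/2)/ε)` and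
`Σ_{j∈I_ε} p_ε (1−q_ε)^{j−1} ≥ exp((b−V−ζ/2)/ε)`. -/
theorem stmt4 (b V ζ δ : ℝ) (hb : 0 ≤ b) (hV : 0 < V)
    (hζ : ζ ∈ Set.Ioo (0:ℝ) 1) (hbV : b + ζ / 2 < V)
    (hδ0 : 0 < δ) (hδ : δ < ζ / 8) :
    ∃ ε₀ > 0, ∀ ε : ℝ, 0 < ε → ε < ε₀ →
      (∑' j : {j : ℕ // 1 ≤ j ∧ ε * Real.log (j : ℕ) ∈ Set.Icc (b - ζ / 4) (b + ζ / 4)},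
          Real.exp (-(V - δ) / ε) * (1 - Real.exp (-(V + δ) / ε)) ^ ((j : ℕ) - 1))
        ≤ Real.exp ((b - V + ζ / 2) / ε) ∧
      Real.exp ((b - V - ζ / 2) / ε) ≤
        (∑' j : {j : ℕ // 1 ≤ j ∧ ε * Real.log (j : ℕ) ∈ Set.Icc (b - ζ / 4) (b + ζ / 4)},
          Real.exp (-(V + δ) / ε) * (1 - Real.exp (-(V - δ) / ε)) ^ ((j : ℕ) - 1)) := by
  classical
  obtain ⟨hζ0, hζ1⟩ := hζ
  have hlog4 : (0:ℝ) < Real.log 4 := Real.log_pos (by norm_num)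
  refine ⟨ζ / (8 * Real.log 4), by positivity, ?_⟩
  intro ε hε hεlt
  have hεne : ε ≠ 0 := ne_of_gt hε
  -- the basic smallness consequence: exp((ζ/8)/ε) ≥ 4
  have hc4 : (4:ℝ) ≤ Real.exp ((ζ/8) / ε) := by
    have h1 : ε * (8 * Real.log 4) < ζ := (lt_div_iff₀ (by positivity)).mp hεlt
    have h2 : Real.log 4 ≤ (ζ/8) / ε := by
      rw [le_div_iff₀ hε]; nlinarith
    calc (4:ℝ) = Real.exp (Real.log 4) := (Real.exp_log (by norm_num)).symm
      _ ≤ _ := Real.exp_le_exp.mpr h2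
  have hexpdiv : ∀ x y : ℝ, x ≤ y → Real.exp (x / ε) ≤ Real.exp (y / ε) := by
    intro x y h
    exact Real.exp_le_exp.mpr (by gcongr)
  have hU0 : (0:ℝ) < Real.exp ((b + ζ/4)/ε) := Real.exp_pos _
  have hL0 : (0:ℝ) < Real.exp ((b - ζ/4)/ε) := Real.exp_pos _
  have hp0 : (0:ℝ) < Real.exp (-(V + δ)/ε) := Real.exp_pos _
  have hq0 : (0:ℝ) < Real.exp (-(V - δ)/ε) := Real.exp_pos _
  have hp1 : Real.exp (-(V + δ)/ε) < 1 := by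
    rw [Real.exp_lt_one_iff]
    exact div_neg_of_neg_of_pos (by linarith) hε
  have hq1 : Real.exp (-(V - δ)/ε) < 1 := by
    rw [Real.exp_lt_one_iff]
    exact div_neg_of_neg_of_pos (by linarith) hε
  -- key exponential inequalities
  have hU16 : (16:ℝ) ≤ Real.exp ((b + ζ/4)/ε) := by
    have h1 : (4:ℝ)*4 ≤ Real.exp ((ζ/8)/ε) * Real.exp ((ζ/8)/ε) :=
      mul_le_mul hc4 hc4 (by norm_num) (Real.exp_pos _).le
    rw [exp_div_mul] at h1
    calc (16:ℝ) = 4*4 := by norm_num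
      _ ≤ Real.exp ((ζ/8 + ζ/8)/ε) := h1
      _ ≤ _ := hexpdiv _ _ (by linarith)
  have hLU : 4 * Real.exp ((b - ζ/4)/ε) ≤ Real.exp ((b + ζ/4)/ε) := by
    have h1 : 4 * Real.exp ((b - ζ/4)/ε) ≤ Real.exp ((ζ/8)/ε) * Real.exp ((b - ζ/4)/ε) :=
      mul_le_mul_of_nonneg_right hc4 hL0.le
    rw [exp_div_mul] at h1
    exact h1.trans (hexpdiv _ _ (by linarith))
  have hqU : Real.exp (-(V - δ)/ε) * Real.exp ((b + ζ/4)/ε) ≤ 1/4 := by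
    rw [exp_div_mul]
    have h1 : Real.exp ((-(V-δ) + (b + ζ/4))/ε) ≤ Real.exp ((-(ζ/8))/ε) :=
      hexpdiv _ _ (by linarith)
    have h2 : Real.exp ((-(ζ/8))/ε) ≤ 1/4 := by
      rw [neg_div, Real.exp_neg, one_div]
      exact inv_anti₀ (by norm_num) hc4
    linarith
  have hUp : 4 * Real.exp ((b - V - ζ/2)/ε)
      ≤ Real.exp ((b + ζ/4)/ε) * Real.exp (-(V + δ)/ε) := by
    rw [exp_div_mul]
    have h1 : 4 * Real.exp ((b - V - ζ/2)/ε)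
        ≤ Real.exp ((ζ/8)/ε) * Real.exp ((b - V - ζ/2)/ε) :=
      mul_le_mul_of_nonneg_right hc4 (Real.exp_pos _).le
    rw [exp_div_mul] at h1
    exact h1.trans (hexpdiv _ _ (by linarith))
  -- the index set as a Finset
  set N := ⌊Real.exp ((b + ζ/4)/ε)⌋₊ with hNdef
  set M := ⌈Real.exp ((b - ζ/4)/ε)⌉₊ with hMdef
  have hNU : (N:ℝ) ≤ Real.exp ((b + ζ/4)/ε) := Nat.floor_le hU0.le
  have hNU' : Real.exp ((b + ζ/4)/ε) - 1 < (N:ℝ) := Nat.sub_one_lt_floor _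
  have hML : Real.exp ((b - ζ/4)/ε) ≤ (M:ℝ) := Nat.le_ceil _
  have hML' : (M:ℝ) < Real.exp ((b - ζ/4)/ε) + 1 := Nat.ceil_lt_add_one hL0.le
  have hM1 : 1 ≤ M := Nat.ceil_pos.mpr hL0
  have hMN : M ≤ N := by
    have h : (M:ℝ) < (N:ℝ) := by linarith
    exact_mod_cast h.le
  set T : Finset ℕ := (Finset.Icc 1 N).filter
      (fun j => ε * Real.log j ∈ Set.Icc (b - ζ/4) (b + ζ/4)) with hTdef
  have hPT : ∀ j : ℕ,
      (1 ≤ j ∧ ε * Real.log j ∈ Set.Icc (b - ζ/4) (b + ζ/4)) ↔ j ∈ T := by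
    intro j
    rw [hTdef, Finset.mem_filter, Finset.mem_Icc]
    constructor
    · rintro ⟨h1, h2⟩
      refine ⟨⟨h1, ?_⟩, h2⟩
      have hj0 : (0:ℝ) < (j:ℝ) := by exact_mod_cast h1
      obtain ⟨_, h2b⟩ := h2
      have hlogj : Real.log j ≤ (b + ζ/4)/ε := by
        rw [le_div_iff₀ hε]
        calc Real.log j * ε = ε * Real.log j := mul_comm _ _
          _ ≤ _ := h2b
      have hjU : (j:ℝ) ≤ Real.exp ((b + ζ/4)/ε) := by
        calc (j:ℝ) = Real.exp (Real.log j) := (Real.exp_log hj0).symm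
          _ ≤ _ := Real.exp_le_exp.mpr hlogj
      exact Nat.le_floor hjU
    · rintro ⟨⟨h1, _⟩, h2⟩
      exact ⟨h1, h2⟩
  have key : ∀ g : ℕ → ℝ,
      (∑' j : {j : ℕ // 1 ≤ j ∧ ε * Real.log (j:ℕ) ∈ Set.Icc (b - ζ/4) (b + ζ/4)},
        g (j:ℕ)) = ∑ j ∈ T, g j := by
    intro g
    rw [← Finset.tsum_subtype T g]
    exact (Equiv.subtypeEquivRight hPT).tsum_eq (fun s : {j : ℕ // j ∈ T} => g s)
  -- cardinality bounds
  have hcard : (T.card : ℝ) ≤ Real.exp ((b + ζ/4)/ε) := by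
    have h1 : T ⊆ Finset.Icc 1 N := by rw [hTdef]; exact Finset.filter_subset _ _
    have h2 : T.card ≤ (Finset.Icc 1 N).card := Finset.card_le_card h1
    have h3 : (Finset.Icc 1 N).card = N := by rw [Nat.card_Icc]; omega
    have h4 : (T.card : ℝ) ≤ (N:ℝ) := by exact_mod_cast h3 ▸ h2
    linarith
  have hsub : Finset.Icc M N ⊆ T := by
    intro j hj
    rw [Finset.mem_Icc] at hj
    obtain ⟨hjM, hjN⟩ := hj
    rw [← hPT]
    have hj1 : 1 ≤ j := le_trans hM1 hjM
    have hj0 : (0:ℝ) < (j:ℝ) := by exact_mod_cast hj1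
    refine ⟨hj1, ?_, ?_⟩
    · have h1 : Real.exp ((b - ζ/4)/ε) ≤ (j:ℝ) :=
        le_trans hML (by exact_mod_cast hjM)
      have h2 : (b - ζ/4)/ε ≤ Real.log j :=
        (Real.le_log_iff_exp_le hj0).mpr h1
      calc b - ζ/4 = ε * ((b - ζ/4)/ε) := by field_simp
        _ ≤ ε * Real.log j := mul_le_mul_of_nonneg_left h2 hε.le
    · have h1 : (j:ℝ) ≤ Real.exp ((b + ζ/4)/ε) :=
        le_trans (by exact_mod_cast hjN : (j:ℝ) ≤ (N:ℝ)) hNU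
      have h2 : Real.log j ≤ (b + ζ/4)/ε :=
        (Real.log_le_iff_le_exp hj0).mpr h1
      calc ε * Real.log j ≤ ε * ((b + ζ/4)/ε) := mul_le_mul_of_nonneg_left h2 hε.le
        _ = b + ζ/4 := by field_simp
  have hcard2 : Real.exp ((b + ζ/4)/ε) / 2 ≤ (T.card : ℝ) := by
    have h1 : (Finset.Icc M N).card ≤ T.card := Finset.card_le_card hsub
    have h2 : (Finset.Icc M N).card = N + 1 - M := Nat.card_Icc M N
    have hM1N : M ≤ N + 1 := le_trans hMN (Nat.le_succ N)
    have h3 : ((N + 1 - M : ℕ) : ℝ) = (N:ℝ) + 1 - (M:ℝ) := by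
      rw [Nat.cast_sub hM1N]; push_cast; ring
    have h4 : (N:ℝ) + 1 - (M:ℝ) ≤ (T.card : ℝ) := by
      rw [← h3]
      exact_mod_cast h2 ▸ h1
    linarith
  constructor
  · -- upper bound
    have e1 := key (fun n : ℕ =>
      Real.exp (-(V - δ) / ε) * (1 - Real.exp (-(V + δ) / ε)) ^ (n - 1))
    rw [e1]
    have hterm : ∀ j ∈ T, Real.exp (-(V - δ)/ε) * (1 - Real.exp (-(V + δ)/ε)) ^ (j - 1)
        ≤ Real.exp (-(V - δ)/ε) := by
      intro j _
      have h1 : (0:ℝ) ≤ 1 - Real.exp (-(V + δ)/ε) := by linarith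
      have h2 : (1 - Real.exp (-(V + δ)/ε)) ^ (j-1) ≤ 1 :=
        pow_le_one₀ h1 (by linarith)
      nlinarith
    have hsum := Finset.sum_le_card_nsmul T _ _ hterm
    rw [nsmul_eq_mul] at hsum
    calc ∑ j ∈ T, Real.exp (-(V - δ)/ε) * (1 - Real.exp (-(V + δ)/ε)) ^ (j - 1)
        ≤ (T.card : ℝ) * Real.exp (-(V - δ)/ε) := hsum
      _ ≤ Real.exp ((b + ζ/4)/ε) * Real.exp (-(V - δ)/ε) :=
          mul_le_mul_of_nonneg_right hcard hq0.le
      _ ≤ Real.exp ((b - V + ζ/2)/ε) := by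
          rw [exp_div_mul]
          exact hexpdiv _ _ (by linarith)
  · -- lower bound
    have e2 := key (fun n : ℕ =>
      Real.exp (-(V + δ) / ε) * (1 - Real.exp (-(V - δ) / ε)) ^ (n - 1))
    rw [e2]
    have hterm2 : ∀ j ∈ T, Real.exp (-(V + δ)/ε) / 2
        ≤ Real.exp (-(V + δ)/ε) * (1 - Real.exp (-(V - δ)/ε)) ^ (j - 1) := by
      intro j hj
      have hjN : j ≤ N := by
        rw [hTdef, Finset.mem_filter, Finset.mem_Icc] at hj
        exact hj.1.2
      have hjU : ((j - 1 : ℕ):ℝ) ≤ Real.exp ((b + ζ/4)/ε) := by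
        have h1 : ((j-1:ℕ):ℝ) ≤ ((j:ℕ):ℝ) := by exact_mod_cast Nat.sub_le j 1
        have h2 : ((j:ℕ):ℝ) ≤ (N:ℝ) := by exact_mod_cast hjN
        linarith
      have hber := one_add_mul_le_pow
        (show (-2:ℝ) ≤ -(Real.exp (-(V - δ)/ε)) by linarith) (j-1)
      have h5 : (1:ℝ) + -(Real.exp (-(V - δ)/ε)) = 1 - Real.exp (-(V-δ)/ε) := by ring
      have h6 : (1:ℝ) + ((j-1:ℕ):ℝ) * -(Real.exp (-(V - δ)/ε))
          = 1 - ((j-1:ℕ):ℝ) * Real.exp (-(V - δ)/ε) := by ring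
      rw [h5, h6] at hber
      have h2 : ((j-1:ℕ):ℝ) * Real.exp (-(V - δ)/ε) ≤ 1/4 := by
        have h3 := mul_le_mul_of_nonneg_right hjU hq0.le
        nlinarith
      have h1 : (1:ℝ)/2 ≤ (1 - Real.exp (-(V - δ)/ε)) ^ (j-1) := by linarith
      have h7 := mul_le_mul_of_nonneg_left h1 hp0.le
      linarith
    have hsum2 := Finset.card_nsmul_le_sum T _ _ hterm2
    rw [nsmul_eq_mul] at hsum2
    calc Real.exp ((b - V - ζ/2)/ε)
        ≤ Real.exp ((b + ζ/4)/ε) * Real.exp (-(V + δ)/ε) / 4 := by linarith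
      _ = (Real.exp ((b + ζ/4)/ε)/2) * (Real.exp (-(V + δ)/ε)/2) := by ring
      _ ≤ (T.card:ℝ) * (Real.exp (-(V + δ)/ε)/2) :=
          mul_le_mul_of_nonneg_right hcard2 (by positivity)
      _ ≤ ∑ j ∈ T, Real.exp (-(V + δ)/ε) * (1 - Real.exp (-(V - δ)/ε)) ^ (j - 1) := hsum2
end

section
/- For every η > 0, lim_{ε→0⁺} ε · log( Σ_{m=0}^{∞} exp( ε^{−1/2}(m+1) − ε · exp( ε^{−1} η/2 + ε^{−1/2} m ) ) ) = −∞. In particular, for each sufficiently small ε > 0 the series converges and the ratio of successive terms tends to 0 uniformly in m as ε → 0⁺. -/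
open Filter Real

lemma aux_pow (c : ℝ) (hc : 0 < c) (k : ℕ) :
    Tendsto (fun ε : ℝ => ε ^ k * Real.exp (c * ε⁻¹)) (nhdsWithin 0 (Set.Ioi 0)) atTop := by
  have h := (tendsto_exp_mul_div_rpow_atTop (k : ℝ) c hc).comp tendsto_inv_nhdsGT_zero
  refine h.congr' ?_
  filter_upwards [self_mem_nhdsWithin] with ε (hε : ε ∈ Set.Ioi 0)
  have hε0 : (0:ℝ) < ε := hε
  simp only [Function.comp]
  rw [Real.rpow_natCast, inv_pow]; field_simp

lemma aux_a : Tendsto (fun ε : ℝ => ε ^ (-(1:ℝ)/2)) (nhdsWithin 0 (Set.Ioi 0)) atTop := by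
  have h := (tendsto_rpow_atTop (y := (1:ℝ)/2) (by norm_num)).comp tendsto_inv_nhdsGT_zero
  refine h.congr' ?_
  filter_upwards [self_mem_nhdsWithin] with ε (hε : ε ∈ Set.Ioi 0)
  have hε0 : (0:ℝ) < ε := hε
  simp only [Function.comp]
  rw [Real.inv_rpow hε0.le, ← Real.rpow_neg hε0.le]
  norm_num

lemma core (η ε : ℝ) (hε : 0 < ε) (hε1 : ε ≤ 1)
    (hB : 2 ≤ ε * Real.exp (ε⁻¹ * η / 2)) :
    Summable (fun m : ℕ => Real.exp (ε ^ (-(1:ℝ)/2) * (m + 1)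
        - ε * Real.exp (ε⁻¹ * η / 2 + ε ^ (-(1:ℝ)/2) * m))) ∧
    (∑' m : ℕ, Real.exp (ε ^ (-(1:ℝ)/2) * (m + 1)
        - ε * Real.exp (ε⁻¹ * η / 2 + ε ^ (-(1:ℝ)/2) * m)))
      ≤ 2 * Real.exp (ε ^ (-(1:ℝ)/2) - ε * Real.exp (ε⁻¹ * η / 2)) ∧
    (0 < ∑' m : ℕ, Real.exp (ε ^ (-(1:ℝ)/2) * (m + 1)
        - ε * Real.exp (ε⁻¹ * η / 2 + ε ^ (-(1:ℝ)/2) * m))) ∧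
    (∀ m : ℕ,
      Real.exp (ε ^ (-(1:ℝ)/2) * (m + 2)
            - ε * Real.exp (ε⁻¹ * η / 2 + ε ^ (-(1:ℝ)/2) * (m + 1))) /
        Real.exp (ε ^ (-(1:ℝ)/2) * (m + 1)
            - ε * Real.exp (ε⁻¹ * η / 2 + ε ^ (-(1:ℝ)/2) * m))
      ≤ Real.exp (-(ε ^ (-(1:ℝ)/2)))) := by
  set a : ℝ := ε ^ (-(1:ℝ)/2) with ha_def
  set B : ℝ := ε * Real.exp (ε⁻¹ * η / 2) with hB_def
  have ha : 0 < a := Real.rpow_pos_of_pos hε _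
  have ha1 : 1 ≤ a :=
    Real.one_le_rpow_of_pos_of_le_one_of_nonpos hε hε1 (by norm_num)
  have hBpos : (0:ℝ) < B := lt_of_lt_of_le two_pos hB
  have hrw : ∀ x : ℝ, ε * Real.exp (ε⁻¹ * η / 2 + x) = B * Real.exp x := by
    intro x; rw [Real.exp_add, hB_def]; ring
  have key : ∀ m : ℕ, Real.exp (a * (m + 1) - ε * Real.exp (ε⁻¹ * η / 2 + a * m))
      ≤ Real.exp (a - B) * Real.exp (-a) ^ m := by
    intro m
    rw [hrw, ← Real.exp_nat_mul, ← Real.exp_add]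
    apply Real.exp_le_exp.2
    have h1 : a * m + 1 ≤ Real.exp (a * m) := Real.add_one_le_exp _
    have hm : (0:ℝ) ≤ a * m := mul_nonneg ha.le (Nat.cast_nonneg m)
    have h2 : B * (a * m + 1) ≤ B * Real.exp (a * m) :=
      mul_le_mul_of_nonneg_left h1 hBpos.le
    have h3 : 2 * (a * m) ≤ B * (a * m) := mul_le_mul_of_nonneg_right hB hm
    nlinarith
  have hr1 : Real.exp (-a) < 1 := by
    rw [Real.exp_lt_one_iff]; linarith
  have hgeom : Summable (fun m : ℕ => Real.exp (a - B) * Real.exp (-a) ^ m) :=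
    (summable_geometric_of_lt_one (Real.exp_nonneg _) hr1).mul_left _
  have hsum : Summable (fun m : ℕ => Real.exp (a * (m + 1)
      - ε * Real.exp (ε⁻¹ * η / 2 + a * m))) :=
    Summable.of_nonneg_of_le (fun m => (Real.exp_pos _).le) key hgeom
  refine ⟨hsum, ?_, ?_, ?_⟩
  · have h4 : Real.exp (-a) ≤ 1/2 := by
      have : Real.exp (-a) ≤ Real.exp (-1) := Real.exp_le_exp.2 (by linarith)
      have h5 : (2:ℝ) ≤ Real.exp 1 := by
        have := Real.add_one_le_exp (1:ℝ); linarith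
      have h6 : Real.exp (-1) ≤ 1/2 := by
        rw [Real.exp_neg]
        rw [inv_le_comm₀ (Real.exp_pos 1) (by norm_num)]
        linarith
      linarith
    calc (∑' m : ℕ, Real.exp (a * (m + 1) - ε * Real.exp (ε⁻¹ * η / 2 + a * m)))
        ≤ ∑' m : ℕ, Real.exp (a - B) * Real.exp (-a) ^ m :=
          Summable.tsum_le_tsum key hsum hgeom
      _ = Real.exp (a - B) * (1 - Real.exp (-a))⁻¹ := by
          rw [tsum_mul_left, tsum_geometric_of_lt_one (Real.exp_nonneg _) hr1]
      _ ≤ Real.exp (a - B) * 2 := by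
          apply mul_le_mul_of_nonneg_left _ (Real.exp_nonneg _)
          rw [inv_le_comm₀ (by linarith) (by norm_num)]
          linarith
      _ = 2 * Real.exp (a - B) := by ring
  · have h0 : Real.exp (a * ((0:ℕ) + 1) - ε * Real.exp (ε⁻¹ * η / 2 + a * (0:ℕ)))
        ≤ ∑' m : ℕ, Real.exp (a * (m + 1) - ε * Real.exp (ε⁻¹ * η / 2 + a * m)) :=
      Summable.le_tsum hsum 0 (fun m _ => (Real.exp_pos _).le)
    exact lt_of_lt_of_le (Real.exp_pos _) h0
  · intro m
    rw [← Real.exp_sub]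
    apply Real.exp_le_exp.2
    rw [hrw, hrw]
    have he : Real.exp (a * (m + 1)) = Real.exp (a * m) * Real.exp a := by
      rw [← Real.exp_add]; ring_nf
    rw [he]
    have h1 : a + 1 ≤ Real.exp a := Real.add_one_le_exp _
    have hm : (0:ℝ) ≤ a * m := mul_nonneg ha.le (Nat.cast_nonneg m)
    have h2 : (1:ℝ) ≤ Real.exp (a * m) := Real.one_le_exp hm
    have k1 : 2 * 1 ≤ B * Real.exp (a * m) :=
      mul_le_mul hB h2 one_pos.le hBpos.le
    have k2 : 2 * 1 * (Real.exp a - 1) ≤ B * Real.exp (a * m) * (Real.exp a - 1) :=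
      mul_le_mul_of_nonneg_right k1 (by linarith)
    nlinarith


/-- The summation in eq. (4.24) is negligible.
For every `η > 0`,
`ε log ( Σ_{m≥0} exp( ε^{-1/2}(m+1) − ε exp(ε⁻¹ η/2 + ε^{-1/2} m) ) ) → −∞` as `ε → 0⁺`;
moreover for all sufficiently small `ε > 0` the series is summable, and the supremum over `m`
of the ratio of successive terms tends to `0` as `ε → 0⁺`. -/
theorem stmt5 (η : ℝ) (hη : 0 < η) :
    Tendsto (fun ε : ℝ => ε * Real.log (∑' m : ℕ,
        Real.exp (ε ^ (-(1:ℝ)/2) * (m + 1)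
          - ε * Real.exp (ε⁻¹ * η / 2 + ε ^ (-(1:ℝ)/2) * m))))
      (nhdsWithin 0 (Set.Ioi 0)) atBot ∧
    (∀ᶠ ε : ℝ in nhdsWithin 0 (Set.Ioi 0), Summable (fun m : ℕ =>
        Real.exp (ε ^ (-(1:ℝ)/2) * (m + 1)
          - ε * Real.exp (ε⁻¹ * η / 2 + ε ^ (-(1:ℝ)/2) * m)))) ∧
    Tendsto (fun ε : ℝ => ⨆ m : ℕ,
        Real.exp (ε ^ (-(1:ℝ)/2) * (m + 2)
            - ε * Real.exp (ε⁻¹ * η / 2 + ε ^ (-(1:ℝ)/2) * (m + 1))) /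
          Real.exp (ε ^ (-(1:ℝ)/2) * (m + 1)
            - ε * Real.exp (ε⁻¹ * η / 2 + ε ^ (-(1:ℝ)/2) * m)))
      (nhdsWithin 0 (Set.Ioi 0)) (nhds 0) := by
  -- basic tendsto facts
  have hpow1 : Tendsto (fun ε : ℝ => ε * Real.exp (ε⁻¹ * η / 2))
      (nhdsWithin 0 (Set.Ioi 0)) atTop := by
    have h := aux_pow (η/2) (by positivity) 1
    refine h.congr fun ε => ?_
    rw [pow_one]; congr 1; ring
  have hpow2 : Tendsto (fun ε : ℝ => ε ^ 2 * Real.exp (ε⁻¹ * η / 2))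
      (nhdsWithin 0 (Set.Ioi 0)) atTop := by
    have h := aux_pow (η/2) (by positivity) 2
    refine h.congr fun ε => ?_
    congr 1; ring
  have hBev : ∀ᶠ ε : ℝ in nhdsWithin 0 (Set.Ioi 0),
      2 ≤ ε * Real.exp (ε⁻¹ * η / 2) := hpow1.eventually_ge_atTop 2
  have hposev : ∀ᶠ ε : ℝ in nhdsWithin 0 (Set.Ioi 0), 0 < ε := by
    filter_upwards [self_mem_nhdsWithin] with ε hε; exact hε
  have hle1 : ∀ᶠ ε : ℝ in nhdsWithin 0 (Set.Ioi 0), ε ≤ 1 := by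
    have : ∀ᶠ ε : ℝ in nhds 0, ε < 1 := eventually_lt_nhds (by norm_num)
    exact (this.filter_mono nhdsWithin_le_nhds).mono fun ε h => h.le
  refine ⟨?_, ?_, ?_⟩
  · -- part 1
    have hg : Tendsto (fun ε : ℝ => Real.log 2 + 1 - ε ^ 2 * Real.exp (ε⁻¹ * η / 2))
        (nhdsWithin 0 (Set.Ioi 0)) atBot := by
      have := tendsto_neg_atTop_atBot.comp hpow2
      have h2 : Tendsto (fun ε : ℝ => (Real.log 2 + 1) + -(ε ^ 2 * Real.exp (ε⁻¹ * η / 2)))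
          (nhdsWithin 0 (Set.Ioi 0)) atBot := tendsto_atBot_add_const_left _ _ this
      refine h2.congr fun ε => by ring
    refine tendsto_atBot_mono' _ ?_ hg
    filter_upwards [hBev, hposev, hle1] with ε hB hε hε1
    obtain ⟨hsum, htsum, htpos, -⟩ := core η ε hε hε1 hB
    have hlog : Real.log (∑' m : ℕ, Real.exp (ε ^ (-(1:ℝ)/2) * (m + 1)
          - ε * Real.exp (ε⁻¹ * η / 2 + ε ^ (-(1:ℝ)/2) * m)))
        ≤ Real.log 2 + (ε ^ (-(1:ℝ)/2) - ε * Real.exp (ε⁻¹ * η / 2)) := by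
      calc Real.log _ ≤ Real.log (2 * Real.exp (ε ^ (-(1:ℝ)/2) - ε * Real.exp (ε⁻¹ * η / 2))) :=
            Real.log_le_log htpos htsum
        _ = Real.log 2 + (ε ^ (-(1:ℝ)/2) - ε * Real.exp (ε⁻¹ * η / 2)) := by
            rw [Real.log_mul two_ne_zero (Real.exp_ne_zero _), Real.log_exp]
    have hmul := mul_le_mul_of_nonneg_left hlog hε.le
    have hεa : ε * ε ^ (-(1:ℝ)/2) ≤ 1 := by
      have : ε * ε ^ (-(1:ℝ)/2) = ε ^ ((1:ℝ)/2) := by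
        rw [show (1:ℝ)/2 = 1 + -(1:ℝ)/2 by norm_num, Real.rpow_add hε, Real.rpow_one]
      rw [this]
      exact Real.rpow_le_one hε.le hε1 (by norm_num)
    have hεlog2 : ε * Real.log 2 ≤ Real.log 2 :=
      mul_le_of_le_one_left (Real.log_nonneg one_le_two) hε1
    have key : ε * (Real.log 2 + (ε ^ (-(1:ℝ)/2) - ε * Real.exp (ε⁻¹ * η / 2)))
        = ε * Real.log 2 + ε * ε ^ (-(1:ℝ)/2) - ε ^ 2 * Real.exp (ε⁻¹ * η / 2) := by ring
    rw [key] at hmul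
    linarith
  · -- part 2
    filter_upwards [hBev, hposev, hle1] with ε hB hε hε1
    exact (core η ε hε hε1 hB).1
  · -- part 3
    have hh : Tendsto (fun ε : ℝ => Real.exp (-(ε ^ (-(1:ℝ)/2))))
        (nhdsWithin 0 (Set.Ioi 0)) (nhds 0) :=
      Real.tendsto_exp_atBot.comp (tendsto_neg_atTop_atBot.comp aux_a)
    refine tendsto_of_tendsto_of_tendsto_of_le_of_le' tendsto_const_nhds hh ?_ ?_
    · filter_upwards with ε
      exact Real.iSup_nonneg fun m => div_nonneg (Real.exp_nonneg _) (Real.exp_nonneg _)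
    · filter_upwards [hBev, hposev, hle1] with ε hB hε hε1
      exact ciSup_le (core η ε hε hε1 hB).2.2.2
end

section
/- Let 0 < b < c be real constants. Then lim_{ε→0⁺} ε · log( Σ_{k ≥ ⌈exp(c/ε)⌉} exp( −k · exp(−b/ε) ) ) = −∞, where the sum is over all integers k with k ≥ ⌈exp(c/ε)⌉. -/
open Filter Topology

/-- Tail of the geometric-type sum is super-exponentially small.
For `0 < b < c`, `ε log ( Σ_{k ≥ ⌈exp(c/ε)⌉} exp(−k e^{−b/ε}) ) → −∞` as `ε → 0⁺`. -/
theorem stmt6 (b c : ℝ) (hb : 0 < b) (hbc : b < c) :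
    Tendsto (fun ε : ℝ => ε * Real.log
        (∑' k : {k : ℕ // ⌈Real.exp (c / ε)⌉₊ ≤ k},
          Real.exp (-((k : ℕ) : ℝ) * Real.exp (-b / ε))))
      (nhdsWithin 0 (Set.Ioi 0)) atBot := by
  have hd0 : 0 < c - b := by linarith
  -- the bounding function tends to -∞
  have hA : Tendsto (fun ε : ℝ => ε * Real.exp ((c - b) / ε)) (𝓝[>] (0:ℝ)) atTop := by
    have h1 : Tendsto (fun ε : ℝ => (c - b) / ε) (𝓝[>] (0:ℝ)) atTop := by
      simpa [div_eq_mul_inv] using tendsto_inv_nhdsGT_zero.const_mul_atTop hd0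
    have h2 : Tendsto (fun y : ℝ => (c - b) * (Real.exp y / y)) atTop atTop :=
      (Real.tendsto_exp_div_pow_atTop 1).const_mul_atTop hd0 |>.congr (by simp)
    apply (h2.comp h1).congr'
    filter_upwards [self_mem_nhdsWithin] with ε (hε : 0 < ε)
    have : (c - b) / ε ≠ 0 := by positivity
    rw [Function.comp_apply]
    field_simp
  have hG : Tendsto (fun ε : ℝ => -(ε * Real.exp ((c - b) / ε)) + (b + Real.log 2))
      (𝓝[>] (0:ℝ)) atBot :=
    tendsto_atBot_add_const_right _ _ (tendsto_neg_atBot_iff.mpr hA)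
  apply hG.mono_right le_rfl |> fun h => tendsto_atBot_mono' _ ?_ h
  -- eventual inequality
  filter_upwards [Ioc_mem_nhdsGT_of_mem (by norm_num : (0:ℝ) ∈ Set.Ico (0:ℝ) 1)]
    with ε hε
  obtain ⟨hε0, hε1⟩ := hε
  set r : ℝ := Real.exp (-b / ε) with hrdef
  set q : ℝ := Real.exp (-r) with hqdef
  set N : ℕ := ⌈Real.exp (c / ε)⌉₊ with hNdef
  have hr0 : 0 < r := Real.exp_pos _
  have hr1 : r ≤ 1 := by
    rw [hrdef, ← Real.exp_zero]
    apply Real.exp_le_exp.mpr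
    rw [neg_div]
    have : 0 < b / ε := by positivity
    linarith
  have hq0 : 0 < q := Real.exp_pos _
  have hq1 : q < 1 := by
    rw [hqdef, ← Real.exp_zero]
    exact Real.exp_lt_exp.mpr (by linarith)
  -- compute the sum
  have hterm : ∀ k : ℕ, Real.exp (-(k:ℝ) * r) = q ^ k := by
    intro k
    rw [hqdef, ← Real.exp_nat_mul]
    ring_nf
  let e : ℕ ≃ {k : ℕ // N ≤ k} :=
    { toFun := fun n => ⟨N + n, Nat.le_add_right N n⟩
      invFun := fun k => (k : ℕ) - N
      left_inv := fun n => by simp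
      right_inv := fun k => by
        ext
        simpa using Nat.add_sub_cancel' k.2 }
  have key : (∑' k : {k : ℕ // N ≤ k}, Real.exp (-((k:ℕ):ℝ) * r)) = q ^ N * (1 - q)⁻¹ := by
    rw [← Equiv.tsum_eq e]
    have : ∀ n : ℕ, Real.exp (-(((e n : {k : ℕ // N ≤ k}) : ℕ) : ℝ) * r) = q ^ N * q ^ n := by
      intro n
      have hen : ((e n : {k : ℕ // N ≤ k}) : ℕ) = N + n := rfl
      rw [hen, hterm (N + n), pow_add]
    rw [tsum_congr this, tsum_mul_left, tsum_geometric_of_lt_one hq0.le hq1]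
  rw [key]
  -- log of the sum
  have h1q : 0 < 1 - q := by linarith
  have hlog : Real.log (q ^ N * (1 - q)⁻¹) = -((N:ℝ) * r) - Real.log (1 - q) := by
    rw [Real.log_mul (by positivity) (by positivity), Real.log_pow, Real.log_inv,
      hqdef, Real.log_exp]
    push_cast
    ring
  rw [hlog]
  -- bound pieces
  have hN : Real.exp (c / ε) ≤ (N : ℝ) := Nat.le_ceil _
  have hNr : Real.exp ((c - b) / ε) ≤ (N : ℝ) * r := by
    have : Real.exp ((c - b) / ε) = Real.exp (c / ε) * r := by
      rw [hrdef, ← Real.exp_add]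
      congr 1
      ring
    rw [this]
    exact mul_le_mul_of_nonneg_right hN hr0.le
  have h1q2 : r / 2 ≤ 1 - q := by
    have hexp := Real.add_one_le_exp r
    have hq : q = (Real.exp r)⁻¹ := by rw [hqdef, Real.exp_neg]
    have hpos : 0 < Real.exp r := Real.exp_pos r
    have hqle : q ≤ (r + 1)⁻¹ := by
      rw [hq]
      exact inv_anti₀ (by linarith) hexp
    have : (r + 1)⁻¹ ≤ 1 - r / 2 := by
      rw [inv_le_iff_one_le_mul₀ (by linarith)]
      nlinarith
    linarith
  have hlog2 : Real.log (r / 2) ≤ Real.log (1 - q) :=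
    Real.log_le_log (by positivity) h1q2
  have hlogr : Real.log (r / 2) = -b / ε - Real.log 2 := by
    rw [Real.log_div hr0.ne' (by norm_num), hrdef, Real.log_exp]
  -- put together
  have step : -((N:ℝ) * r) - Real.log (1 - q) ≤ -Real.exp ((c - b) / ε) + (b / ε + Real.log 2) := by
    have := hlog2
    rw [hlogr, neg_div] at this
    have h2 : -Real.log (1 - q) ≤ b / ε + Real.log 2 := by linarith
    linarith
  calc ε * (-((N:ℝ) * r) - Real.log (1 - q))
      ≤ ε * (-Real.exp ((c - b) / ε) + (b / ε + Real.log 2)) :=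
        mul_le_mul_of_nonneg_left step hε0.le
    _ = -(ε * Real.exp ((c - b) / ε)) + (b + ε * Real.log 2) := by
        field_simp
    _ ≤ -(ε * Real.exp ((c - b) / ε)) + (b + Real.log 2) := by
        have : ε * Real.log 2 ≤ Real.log 2 := by
          nlinarith [Real.log_nonneg (by norm_num : (1:ℝ) ≤ 2)]
        linarith
end

section
/- Fix T > 0. The curves t ↦ φ_{t|T} and t ↦ p_{t|T} are differentiable on [0,T] and satisfy the Hamiltonian system (d/dt) φ_{t|T} = A φ_{t|T} + 2 p_{t|T} and (d/dt) p_{t|T} = −Aᵀ p_{t|T} for all t ∈ [0,T], together with the boundary conditions φ_{0|T} = 0 and φ_{T|T} = L. -/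
open scoped Matrix

private lemma hasDerivAt_E2 {f : ℝ → EuclideanSpace ℝ (Fin 2)} {v : EuclideanSpace ℝ (Fin 2)}
    {t : ℝ} (h : ∀ i, HasDerivAt (fun s => f s i) (v i) t) : HasDerivAt f v t := by
  let e := PiLp.continuousLinearEquiv 2 ℝ (fun _ : Fin 2 => ℝ)
  have h1 : HasDerivAt (fun s => e (f s)) (e v) t := hasDerivAt_pi.2 h
  have h2 := (e.symm.toContinuousLinearMap.hasFDerivAt (x := e (f t))).comp_hasDerivAt t h1
  simpa [e, Function.comp_def] using h2

private lemma smul_toEuclideanLin_apply (c : ℝ) (M : Matrix (Fin 2) (Fin 2) ℝ)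
    (L : EuclideanSpace ℝ (Fin 2)) (i : Fin 2) :
    (c • Matrix.toEuclideanLin M L) i = c * (M i 0 * L 0 + M i 1 * L 1) := by
  simp [Matrix.toEuclideanLin_apply, Matrix.mulVec, dotProduct, Fin.sum_univ_two]
  fin_cases i <;> simp

/-- The explicit suboptimal MLT solves the Hamiltonian system.
For the 2D OU process with matrix `A = !![-μ, -ω; ω, -μ]` and rotation matrices `R_t`, the
curves `φ_{t|T} = ((e^{μt} − e^{−μt})/(e^{μT} − e^{−μT})) R_{t−T} L` and
`p_{t|T} = (μ e^{μt}/(e^{μT} − e^{−μT})) R_{t−T} L` satisfy, on `[0,T]`,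
`φ' = Aφ + 2p`, `p' = −Aᵀ p`, with `φ_{0|T} = 0` and `φ_{T|T} = L`. -/
theorem stmt11 (μ ω T : ℝ) (hμ : 0 < μ) (hT : 0 < T)
    (L : EuclideanSpace ℝ (Fin 2)) (hL : L ≠ 0)
    (A : Matrix (Fin 2) (Fin 2) ℝ) (hA : A = !![-μ, -ω; ω, -μ])
    (R : ℝ → Matrix (Fin 2) (Fin 2) ℝ)
    (hR : ∀ t, R t = !![Real.cos (ω * t), -Real.sin (ω * t);
                        Real.sin (ω * t), Real.cos (ω * t)])
    (φ p : ℝ → EuclideanSpace ℝ (Fin 2))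
    (hφ : ∀ t, φ t = ((Real.exp (μ * t) - Real.exp (-(μ * t))) /
        (Real.exp (μ * T) - Real.exp (-(μ * T)))) • Matrix.toEuclideanLin (R (t - T)) L)
    (hp : ∀ t, p t = (μ * Real.exp (μ * t) /
        (Real.exp (μ * T) - Real.exp (-(μ * T)))) • Matrix.toEuclideanLin (R (t - T)) L) :
    (∀ t ∈ Set.Icc (0:ℝ) T,
        HasDerivAt φ (Matrix.toEuclideanLin A (φ t) + (2:ℝ) • p t) t ∧
        HasDerivAt p (-(Matrix.toEuclideanLin Aᵀ (p t))) t) ∧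
    φ 0 = 0 ∧ φ T = L := by
  set D := Real.exp (μ * T) - Real.exp (-(μ * T)) with hD
  have hDpos : 0 < D := by
    have : Real.exp (-(μ * T)) < Real.exp (μ * T) := Real.exp_lt_exp.2 (by nlinarith)
    simpa [hD] using sub_pos.2 this
  -- component formulas
  have hφc : ∀ s, ∀ i : Fin 2, φ s i =
      ((Real.exp (μ * s) - Real.exp (-(μ * s))) / D) *
        ((R (s - T)) i 0 * L 0 + (R (s - T)) i 1 * L 1) := by
    intro s i; rw [hφ]; exact smul_toEuclideanLin_apply _ _ _ _
  have hpc : ∀ s, ∀ i : Fin 2, p s i =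
      (μ * Real.exp (μ * s) / D) *
        ((R (s - T)) i 0 * L 0 + (R (s - T)) i 1 * L 1) := by
    intro s i; rw [hp]; exact smul_toEuclideanLin_apply _ _ _ _
  -- scalar derivatives
  have hc : ∀ t : ℝ, HasDerivAt (fun s => (Real.exp (μ * s) - Real.exp (-(μ * s))) / D)
      (μ * (Real.exp (μ * t) + Real.exp (-(μ * t))) / D) t := by
    intro t
    have h1 : HasDerivAt (fun s => Real.exp (μ * s)) (μ * Real.exp (μ * t)) t := by
      simpa [mul_comm, Function.comp_def] using (Real.hasDerivAt_exp (μ * t)).comp t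
        ((hasDerivAt_id t).const_mul μ)
    have h2 : HasDerivAt (fun s => Real.exp (-(μ * s))) (-μ * Real.exp (-(μ * t))) t := by
      have := (Real.hasDerivAt_exp (-(μ * t))).comp t
        (((hasDerivAt_id t).const_mul μ).neg)
      simpa [mul_comm, Function.comp_def] using this
    have := (h1.sub h2).div_const D
    exact this.congr_deriv (by ring)
  have hk : ∀ t : ℝ, HasDerivAt (fun s => μ * Real.exp (μ * s) / D)
      (μ * (μ * Real.exp (μ * t)) / D) t := by
    intro t
    have h1 : HasDerivAt (fun s => Real.exp (μ * s)) (μ * Real.exp (μ * t)) t := by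
      simpa [mul_comm, Function.comp_def] using (Real.hasDerivAt_exp (μ * t)).comp t
        ((hasDerivAt_id t).const_mul μ)
    have := (h1.const_mul μ).div_const D
    convert this using 1 <;> ring
  have hcos : ∀ t : ℝ, HasDerivAt (fun s => Real.cos (ω * (s - T)))
      (-Real.sin (ω * (t - T)) * ω) t := by
    intro t
    have hlin : HasDerivAt (fun s : ℝ => ω * (s - T)) ω t := by
      simpa using (((hasDerivAt_id t).sub_const T).const_mul ω)
    simpa [Function.comp_def] using (Real.hasDerivAt_cos (ω * (t - T))).comp t hlin
  have hsin : ∀ t : ℝ, HasDerivAt (fun s => Real.sin (ω * (s - T)))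
      (Real.cos (ω * (t - T)) * ω) t := by
    intro t
    have hlin : HasDerivAt (fun s : ℝ => ω * (s - T)) ω t := by
      simpa using (((hasDerivAt_id t).sub_const T).const_mul ω)
    simpa [Function.comp_def] using (Real.hasDerivAt_sin (ω * (t - T))).comp t hlin
  refine ⟨?_, ?_, ?_⟩
  · intro t _
    constructor
    · apply hasDerivAt_E2
      intro i
      -- derivative of each component of φ
      have base : HasDerivAt (fun s => φ s i)
          (μ * (Real.exp (μ * t) + Real.exp (-(μ * t))) / D *
              ((R (t - T)) i 0 * L 0 + (R (t - T)) i 1 * L 1)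
            + (Real.exp (μ * t) - Real.exp (-(μ * t))) / D *
              ((if i = 0 then (-Real.sin (ω * (t - T)) * ω) * L 0 +
                  (-(Real.cos (ω * (t - T)) * ω)) * L 1
                else (Real.cos (ω * (t - T)) * ω) * L 0 +
                  (-Real.sin (ω * (t - T)) * ω) * L 1))) t := by
        rcases (by omega : i = 0 ∨ i = 1) with rfl | rfl
        · have hfun : (fun s => φ s 0) = fun s =>
              ((Real.exp (μ * s) - Real.exp (-(μ * s))) / D) *
                (Real.cos (ω * (s - T)) * L 0 + (-Real.sin (ω * (s - T))) * L 1) := by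
            funext s; rw [hφc s 0]; simp [hR]
          rw [hfun]
          have := (hc t).mul
            ((((hcos t).mul_const (L 0))).add (((hsin t).neg).mul_const (L 1)))
          refine this.congr_deriv ?_
          simp [hR, Pi.add_apply, Pi.neg_apply]
        · have hfun : (fun s => φ s 1) = fun s =>
              ((Real.exp (μ * s) - Real.exp (-(μ * s))) / D) *
                (Real.sin (ω * (s - T)) * L 0 + Real.cos (ω * (s - T)) * L 1) := by
            funext s; rw [hφc s 1]; simp [hR]
          rw [hfun]
          have := (hc t).mul
            (((hsin t).mul_const (L 0)).add ((hcos t).mul_const (L 1)))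
          refine this.congr_deriv ?_
          simp [hR, Pi.add_apply, Pi.neg_apply]
      convert base using 1
      have : (Matrix.toEuclideanLin A (φ t) + (2:ℝ) • p t) i =
          (A i 0 * φ t 0 + A i 1 * φ t 1) + 2 * p t i := by
        have h1 := smul_toEuclideanLin_apply 1 A (φ t) i
        simp only [one_smul, one_mul] at h1
        simp [h1, PiLp.add_apply, PiLp.smul_apply, smul_eq_mul]
      rw [this, hφc t 0, hφc t 1, hpc t i]
      rcases (by omega : i = 0 ∨ i = 1) with rfl | rfl <;> simp [hA, hR] <;> ring
    · apply hasDerivAt_E2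
      intro i
      have base : HasDerivAt (fun s => p s i)
          (μ * (μ * Real.exp (μ * t)) / D *
              ((R (t - T)) i 0 * L 0 + (R (t - T)) i 1 * L 1)
            + μ * Real.exp (μ * t) / D *
              ((if i = 0 then (-Real.sin (ω * (t - T)) * ω) * L 0 +
                  (-(Real.cos (ω * (t - T)) * ω)) * L 1
                else (Real.cos (ω * (t - T)) * ω) * L 0 +
                  (-Real.sin (ω * (t - T)) * ω) * L 1))) t := by
        rcases (by omega : i = 0 ∨ i = 1) with rfl | rfl
        · have hfun : (fun s => p s 0) = fun s =>
              (μ * Real.exp (μ * s) / D) *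
                (Real.cos (ω * (s - T)) * L 0 + (-Real.sin (ω * (s - T))) * L 1) := by
            funext s; rw [hpc s 0]; simp [hR]
          rw [hfun]
          have := (hk t).mul
            ((((hcos t).mul_const (L 0))).add (((hsin t).neg).mul_const (L 1)))
          refine this.congr_deriv ?_
          simp [hR, Pi.add_apply, Pi.neg_apply]
        · have hfun : (fun s => p s 1) = fun s =>
              (μ * Real.exp (μ * s) / D) *
                (Real.sin (ω * (s - T)) * L 0 + Real.cos (ω * (s - T)) * L 1) := by
            funext s; rw [hpc s 1]; simp [hR]
          rw [hfun]
          have := (hk t).mul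
            (((hsin t).mul_const (L 0)).add ((hcos t).mul_const (L 1)))
          refine this.congr_deriv ?_
          simp [hR, Pi.add_apply, Pi.neg_apply]
      convert base using 1
      have : (-(Matrix.toEuclideanLin Aᵀ (p t))) i =
          -(Aᵀ i 0 * p t 0 + Aᵀ i 1 * p t 1) := by
        have h1 := smul_toEuclideanLin_apply 1 Aᵀ (p t) i
        simp only [one_smul, one_mul] at h1
        simp [PiLp.neg_apply, h1]
      rw [this, hpc t 0, hpc t 1]
      rcases (by omega : i = 0 ∨ i = 1) with rfl | rfl <;> simp [hA, hR, Matrix.transpose] <;> ring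
  · rw [hφ]; simp
  · rw [hφ]
    have hc1 : (Real.exp (μ * T) - Real.exp (-(μ * T))) / D = 1 :=
      div_self (ne_of_gt hDpos)
    rw [hc1, one_smul]
    ext i
    have h1 := smul_toEuclideanLin_apply 1 (R (T - T)) L i
    simp only [one_smul, one_mul] at h1
    rw [h1]
    rcases (by omega : i = 0 ∨ i = 1) with rfl | rfl <;> simp [hR]
end

section
/- Fix T > 0 and define S_{t|T} = (μ ‖L‖²/2) · ( e^{−2μT}/(1 − e^{−2μT})² ) · ( e^{2μt} − 1 ) for t ∈ [0,T], and V(x,t) = (μ/2) ‖x‖² / (1 − e^{−2μt}) for x ∈ ℝ², t > 0. Then: (i) S_{0|T} = 0; (ii) (d/dt) S_{t|T} = ‖p_{t|T}‖² for all t ∈ [0,T]; and (iii) S_{t|T} = V(φ_{t|T}, t) for all t ∈ (0,T]. -/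
lemma rot_norm (c s : ℝ) (h : c^2 + s^2 = 1) (L : EuclideanSpace ℝ (Fin 2)) :
    ‖Matrix.toEuclideanLin !![c, -s; s, c] L‖ = ‖L‖ := by
  have h1 : ∀ v : EuclideanSpace ℝ (Fin 2), ‖v‖ = Real.sqrt (v 0 ^ 2 + v 1 ^ 2) := by
    intro v
    rw [EuclideanSpace.norm_eq]
    simp [Fin.sum_univ_two, sq_abs]
  rw [h1, h1]
  congr 1
  have e0 : (Matrix.toEuclideanLin !![c, -s; s, c] L) 0 = c * L 0 - s * L 1 := by
    simp [Matrix.toEuclideanLin_apply, Matrix.mulVec, dotProduct, Fin.sum_univ_two]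
    ring
  have e1 : (Matrix.toEuclideanLin !![c, -s; s, c] L) 1 = s * L 0 + c * L 1 := by
    simp [Matrix.toEuclideanLin_apply, Matrix.mulVec, dotProduct, Fin.sum_univ_two]
  rw [e0, e1]
  nlinarith [sq_nonneg (L 0), sq_nonneg (L 1)]

/-- The cost along the suboptimal MLT.
With `S_{t|T} = (μ‖L‖²/2)(e^{−2μT}/(1 − e^{−2μT})²)(e^{2μt} − 1)` and
`V(x,t) = (μ/2)‖x‖²/(1 − e^{−2μt})`: (i) `S_{0|T} = 0`; (ii) `S' = ‖p_{t|T}‖²` on `[0,T]`;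
(iii) `S_{t|T} = V(φ_{t|T}, t)` on `(0,T]`. -/
theorem stmt12 (μ ω T : ℝ) (hμ : 0 < μ) (hT : 0 < T)
    (L : EuclideanSpace ℝ (Fin 2)) (hL : L ≠ 0)
    (R : ℝ → Matrix (Fin 2) (Fin 2) ℝ)
    (hR : ∀ t, R t = !![Real.cos (ω * t), -Real.sin (ω * t);
                        Real.sin (ω * t), Real.cos (ω * t)])
    (φ p : ℝ → EuclideanSpace ℝ (Fin 2))
    (hφ : ∀ t, φ t = ((Real.exp (μ * t) - Real.exp (-(μ * t))) /
        (Real.exp (μ * T) - Real.exp (-(μ * T)))) • Matrix.toEuclideanLin (R (t - T)) L)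
    (hp : ∀ t, p t = (μ * Real.exp (μ * t) /
        (Real.exp (μ * T) - Real.exp (-(μ * T)))) • Matrix.toEuclideanLin (R (t - T)) L)
    (S : ℝ → ℝ)
    (hS : ∀ t, S t = μ * ‖L‖ ^ 2 / 2 *
        (Real.exp (-(2 * μ * T)) / (1 - Real.exp (-(2 * μ * T))) ^ 2) *
        (Real.exp (2 * μ * t) - 1))
    (V : EuclideanSpace ℝ (Fin 2) → ℝ → ℝ)
    (hV : ∀ x t, V x t = μ / 2 * ‖x‖ ^ 2 / (1 - Real.exp (-(2 * μ * t)))) :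
    S 0 = 0 ∧
    (∀ t ∈ Set.Icc (0:ℝ) T, HasDerivAt S (‖p t‖ ^ 2) t) ∧
    (∀ t ∈ Set.Ioc (0:ℝ) T, S t = V (φ t) t) := by
  have hRL : ∀ s, ‖(Matrix.toEuclideanLin (R s)) L‖ = ‖L‖ := by
    intro s
    rw [hR]
    exact rot_norm _ _ (by rw [← Real.cos_sq_add_sin_sq (ω * s)]) L
  set a := Real.exp (μ * T) with ha
  set b := Real.exp (-(μ * T)) with hb
  have hab : a * b = 1 := by rw [ha, hb, ← Real.exp_add]; simp
  have hb2 : Real.exp (-(2 * μ * T)) = b ^ 2 := by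
    rw [hb, ← Real.exp_nat_mul]; ring_nf
  have hbpos : 0 < b := Real.exp_pos _
  have hapos : 0 < a := Real.exp_pos _
  have hba : b < a := by
    rw [ha, hb]; exact Real.exp_lt_exp.2 (by nlinarith)
  have hD : 0 < a - b := by linarith
  have hDne : a - b ≠ 0 := ne_of_gt hD
  have h1b : 0 < 1 - b ^ 2 := by nlinarith
  -- exp facts at t
  have hexp2 : ∀ t : ℝ, Real.exp (2 * μ * t) = Real.exp (μ * t) ^ 2 := by
    intro t
    rw [← Real.exp_nat_mul]; ring_nf
  have hexpneg : ∀ t : ℝ, Real.exp (μ * t) * Real.exp (-(μ * t)) = 1 := by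
    intro t; rw [← Real.exp_add]; simp
  have hexpneg2 : ∀ t : ℝ, Real.exp (-(2 * μ * t)) = Real.exp (-(μ * t)) ^ 2 := by
    intro t; rw [← Real.exp_nat_mul]; ring_nf
  have key : Real.exp (-(2 * μ * T)) / (1 - Real.exp (-(2 * μ * T))) ^ 2
      = 1 / (a - b) ^ 2 := by
    rw [hb2]
    have h1 : 1 - b ^ 2 = b * (a - b) := by nlinarith
    rw [h1]
    field_simp
  refine ⟨by rw [hS]; simp, ?_, ?_⟩
  · intro t _
    have hfun : S = fun t => μ * ‖L‖ ^ 2 / 2 *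
        (Real.exp (-(2 * μ * T)) / (1 - Real.exp (-(2 * μ * T))) ^ 2) *
        (Real.exp (2 * μ * t) - 1) := funext hS
    rw [hfun]
    have hd : HasDerivAt (fun t => μ * ‖L‖ ^ 2 / 2 *
        (Real.exp (-(2 * μ * T)) / (1 - Real.exp (-(2 * μ * T))) ^ 2) *
        (Real.exp (2 * μ * t) - 1))
        (μ * ‖L‖ ^ 2 / 2 * (Real.exp (-(2 * μ * T)) / (1 - Real.exp (-(2 * μ * T))) ^ 2)
          * (Real.exp (2 * μ * t) * (2 * μ))) t := by
      have h1 : HasDerivAt (fun t : ℝ => 2 * μ * t) (2 * μ) t := by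
        simpa using (hasDerivAt_id t).const_mul (2 * μ)
      have h2 := (h1.exp.sub_const 1).const_mul (μ * ‖L‖ ^ 2 / 2 *
        (Real.exp (-(2 * μ * T)) / (1 - Real.exp (-(2 * μ * T))) ^ 2))
      simpa [mul_comm, mul_assoc] using h2
    convert hd using 1
    rw [hp, norm_smul, hRL, Real.norm_eq_abs, abs_of_pos
      (by positivity : (0:ℝ) < μ * Real.exp (μ * t) / (a - b)), key, hexp2]
    field_simp
  · intro t ht
    rw [hS, hV, hφ, norm_smul, hRL, Real.norm_eq_abs]
    have hbt : Real.exp (-(μ * t)) < Real.exp (μ * t) :=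
      Real.exp_lt_exp.2 (by nlinarith [ht.1])
    rw [abs_of_pos (div_pos (by linarith) hD), key, hexpneg2, hexp2,
      Real.exp_neg (μ * t)]
    have hgt : 1 < Real.exp (μ * t) := by
      rw [show (1:ℝ) = Real.exp 0 by simp]
      exact Real.exp_lt_exp.2 (by nlinarith [ht.1])
    have hne : Real.exp (μ * t) ^ 2 - 1 ≠ 0 := by nlinarith
    have hEne : Real.exp (μ * t) ≠ 0 := (Real.exp_pos _).ne'
    field_simp
end

section
/- Define, for s ≤ 0, φ_s = e^{μs} R_s L, p_s = μ e^{μs} R_s L, and S_s = (μ/2) e^{2μs} ‖L‖². Then: (i) (d/ds) φ_s = A φ_s + 2 p_s and (d/ds) p_s = −Aᵀ p_s for all s ≤ 0; (ii) φ_0 = L; (iii) φ_s → 0 and p_s → 0 as s → −∞; and (iv) (d/ds) S_s = ‖p_s‖² with S_0 = (μ/2)‖L‖². That is, (φ_s, p_s) is the zero-energy solution of the Hamiltonian system converging backward in time to the fixed point (0,0), with terminal cost equal to the quasi-potential value (μ/2)‖L‖². -/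
open scoped Matrix
open Filter

private lemma normsq2 (x : EuclideanSpace ℝ (Fin 2)) : ‖x‖^2 = x 0 ^2 + x 1 ^2 := by
  rw [EuclideanSpace.norm_eq, Real.sq_sqrt (by positivity)]
  simp [Fin.sum_univ_two, sq_abs]


/-- The globally optimal MLT for the 2D OU process.
With `φ_s = e^{μs} R_s L`, `p_s = μ e^{μs} R_s L`, `S_s = (μ/2) e^{2μs} ‖L‖²` for `s ≤ 0`:
(i) `φ' = Aφ + 2p`, `p' = −Aᵀ p` on `(−∞,0]`; (ii) `φ_0 = L`; (iii) `φ_s → 0` and `p_s → 0`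
as `s → −∞`; (iv) `S' = ‖p_s‖²` with `S_0 = (μ/2)‖L‖²`. -/
theorem stmt13 (μ ω : ℝ) (hμ : 0 < μ)
    (L : EuclideanSpace ℝ (Fin 2)) (hL : L ≠ 0)
    (A : Matrix (Fin 2) (Fin 2) ℝ) (hA : A = !![-μ, -ω; ω, -μ])
    (R : ℝ → Matrix (Fin 2) (Fin 2) ℝ)
    (hR : ∀ t, R t = !![Real.cos (ω * t), -Real.sin (ω * t);
                        Real.sin (ω * t), Real.cos (ω * t)])
    (φ p : ℝ → EuclideanSpace ℝ (Fin 2)) (S : ℝ → ℝ)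
    (hφ : ∀ s, φ s = Real.exp (μ * s) • Matrix.toEuclideanLin (R s) L)
    (hp : ∀ s, p s = (μ * Real.exp (μ * s)) • Matrix.toEuclideanLin (R s) L)
    (hS : ∀ s, S s = μ / 2 * Real.exp (2 * μ * s) * ‖L‖ ^ 2) :
    (∀ s ≤ (0:ℝ),
        HasDerivAt φ (Matrix.toEuclideanLin A (φ s) + (2:ℝ) • p s) s ∧
        HasDerivAt p (-(Matrix.toEuclideanLin Aᵀ (p s))) s) ∧
    φ 0 = L ∧
    (Tendsto φ atBot (nhds 0) ∧ Tendsto p atBot (nhds 0)) ∧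
    ((∀ s ≤ (0:ℝ), HasDerivAt S (‖p s‖ ^ 2) s) ∧ S 0 = μ / 2 * ‖L‖ ^ 2) := by
  set JL : EuclideanSpace ℝ (Fin 2) := WithLp.toLp 2 ![-L 1, L 0] with hJL
  have hJL0 : JL 0 = -L 1 := rfl
  have hJL1 : JL 1 = L 0 := rfl
  have hvL : ∀ s, (Matrix.toEuclideanLin (R s) L : EuclideanSpace ℝ (Fin 2))
      = Real.cos (ω*s) • L + Real.sin (ω*s) • JL := by
    intro s
    ext i
    fin_cases i <;>
      simp [hR, Matrix.toEuclideanLin_apply, Matrix.mulVec, dotProduct,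
        Fin.sum_univ_two, hJL, PiLp.add_apply, PiLp.smul_apply, smul_eq_mul] <;> ring
  have hφ' : φ = fun s => (Real.exp (μ*s) * Real.cos (ω*s)) • L
      + (Real.exp (μ*s) * Real.sin (ω*s)) • JL := by
    funext s; rw [hφ, hvL, smul_add, smul_smul, smul_smul]
  have hp' : p = fun s => (μ * Real.exp (μ*s) * Real.cos (ω*s)) • L
      + (μ * Real.exp (μ*s) * Real.sin (ω*s)) • JL := by
    funext s; rw [hp, hvL, smul_add, smul_smul, smul_smul]
  have hexp : ∀ s : ℝ, HasDerivAt (fun t => Real.exp (μ*t)) (μ * Real.exp (μ*s)) s := by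
    intro s
    have h := (Real.hasDerivAt_exp (μ*s)).comp s ((hasDerivAt_id s).const_mul μ)
    simpa [mul_comm, Function.comp_def] using h
  have hcos : ∀ s : ℝ, HasDerivAt (fun t => Real.cos (ω*t)) (-(ω * Real.sin (ω*s))) s := by
    intro s
    have h := (Real.hasDerivAt_cos (ω*s)).comp s ((hasDerivAt_id s).const_mul ω)
    simpa [mul_comm, Function.comp_def] using h
  have hsin : ∀ s : ℝ, HasDerivAt (fun t => Real.sin (ω*t)) (ω * Real.cos (ω*s)) s := by
    intro s
    have h := (Real.hasDerivAt_sin (ω*s)).comp s ((hasDerivAt_id s).const_mul ω)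
    simpa [mul_comm, Function.comp_def] using h
  have hf1 : ∀ s : ℝ, HasDerivAt (fun t => Real.exp (μ*t) * Real.cos (ω*t))
      (μ * Real.exp (μ*s) * Real.cos (ω*s) + Real.exp (μ*s) * (-(ω * Real.sin (ω*s)))) s :=
    fun s => (hexp s).mul (hcos s)
  have hf2 : ∀ s : ℝ, HasDerivAt (fun t => Real.exp (μ*t) * Real.sin (ω*t))
      (μ * Real.exp (μ*s) * Real.sin (ω*s) + Real.exp (μ*s) * (ω * Real.cos (ω*s))) s :=
    fun s => (hexp s).mul (hsin s)
  have htφ : Tendsto φ atBot (nhds 0) := by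
    have he0 : Tendsto (fun s : ℝ => Real.exp (μ*s) * (‖L‖ + ‖JL‖)) atBot (nhds 0) := by
      have h1 : Tendsto (fun s : ℝ => μ * s) atBot atBot := tendsto_id.const_mul_atBot hμ
      have h2 : Tendsto (fun s : ℝ => Real.exp (μ*s)) atBot (nhds 0) :=
        Real.tendsto_exp_atBot.comp h1
      simpa using h2.mul_const (‖L‖ + ‖JL‖)
    refine squeeze_zero_norm (fun s => ?_) he0
    rw [hφ']
    have h1 : ‖(Real.exp (μ*s) * Real.cos (ω*s)) • L + (Real.exp (μ*s) * Real.sin (ω*s)) • JL‖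
        ≤ ‖(Real.exp (μ*s) * Real.cos (ω*s)) • L‖ + ‖(Real.exp (μ*s) * Real.sin (ω*s)) • JL‖ :=
      norm_add_le _ _
    refine h1.trans ?_
    rw [norm_smul, norm_smul, Real.norm_eq_abs, Real.norm_eq_abs, abs_mul, abs_mul,
      abs_of_pos (Real.exp_pos _)]
    have hc1 : |Real.cos (ω*s)| ≤ 1 := Real.abs_cos_le_one _
    have hs1 : |Real.sin (ω*s)| ≤ 1 := Real.abs_sin_le_one _
    have hLn : (0:ℝ) ≤ ‖L‖ := norm_nonneg _
    have hJn : (0:ℝ) ≤ ‖JL‖ := norm_nonneg _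
    have he : (0:ℝ) ≤ Real.exp (μ*s) := (Real.exp_pos _).le
    have k1 : Real.exp (μ*s) * |Real.cos (ω*s)| * ‖L‖ ≤ Real.exp (μ*s) * 1 * ‖L‖ :=
      mul_le_mul_of_nonneg_right (mul_le_mul_of_nonneg_left hc1 he) hLn
    have k2 : Real.exp (μ*s) * |Real.sin (ω*s)| * ‖JL‖ ≤ Real.exp (μ*s) * 1 * ‖JL‖ :=
      mul_le_mul_of_nonneg_right (mul_le_mul_of_nonneg_left hs1 he) hJn
    nlinarith [k1, k2]
  refine ⟨?_, ?_, ⟨htφ, ?_⟩, ?_, ?_⟩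
  · intro s _
    constructor
    · have hd := ((hf1 s).smul_const L).add ((hf2 s).smul_const JL)
      simp only [Pi.add_def] at hd
      rw [← hφ'] at hd
      have heq : Matrix.toEuclideanLin A (φ s) + (2:ℝ) • p s
          = (μ * Real.exp (μ*s) * Real.cos (ω*s) + Real.exp (μ*s) * (-(ω * Real.sin (ω*s)))) • L
          + (μ * Real.exp (μ*s) * Real.sin (ω*s) + Real.exp (μ*s) * (ω * Real.cos (ω*s))) • JL := by
        ext i
        fin_cases i <;>
          simp [hA, hφ', hp', Matrix.toEuclideanLin_apply, Matrix.mulVec, dotProduct, Matrix.vecHead, Matrix.vecTail, Pi.smul_apply,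
            Fin.sum_univ_two, hJL, PiLp.add_apply, PiLp.smul_apply, smul_eq_mul] <;> ring
      rw [heq]; exact hd
    · have hd := (((hf1 s).const_mul μ).smul_const L).add (((hf2 s).const_mul μ).smul_const JL)
      have hp2 : p = fun t => (μ * (Real.exp (μ*t) * Real.cos (ω*t))) • L
          + (μ * (Real.exp (μ*t) * Real.sin (ω*t))) • JL := by
        rw [hp']; funext t; simp only [mul_assoc]
      simp only [Pi.add_def] at hd
      rw [← hp2] at hd
      have heq : -(Matrix.toEuclideanLin Aᵀ (p s))
          = (μ * (μ * Real.exp (μ*s) * Real.cos (ω*s) + Real.exp (μ*s) * (-(ω * Real.sin (ω*s))))) • L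
          + (μ * (μ * Real.exp (μ*s) * Real.sin (ω*s) + Real.exp (μ*s) * (ω * Real.cos (ω*s)))) • JL := by
        ext i
        fin_cases i <;>
          simp [hA, hp', Matrix.toEuclideanLin_apply, Matrix.mulVec, dotProduct, Matrix.vecHead, Matrix.vecTail, Pi.smul_apply,
            Matrix.transpose, Fin.sum_univ_two, hJL, PiLp.add_apply, PiLp.smul_apply,
            PiLp.neg_apply, smul_eq_mul] <;> ring
      rw [heq]; exact hd
  · rw [hφ, hvL]; simp
  · have hpf : p = fun s => μ • φ s := by
      funext s; rw [hp, hφ, smul_smul]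
    rw [hpf]
    simpa using htφ.const_smul μ
  · intro s _
    have hd : HasDerivAt S (μ / 2 * (Real.exp (2*μ*s) * (2*μ)) * ‖L‖^2) s := by
      have h := ((Real.hasDerivAt_exp (2*μ*s)).comp s ((hasDerivAt_id s).const_mul (2*μ)))
      have h2 := (h.const_mul (μ/2)).mul_const (‖L‖^2)
      have hSfun : S = fun t => μ / 2 * Real.exp (2*μ*t) * ‖L‖^2 := funext hS
      rw [hSfun]
      simpa [mul_assoc, mul_comm, mul_left_comm] using h2
    have heq : ‖p s‖^2 = μ / 2 * (Real.exp (2*μ*s) * (2*μ)) * ‖L‖^2 := by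
      have he2 : Real.exp (2*μ*s) = Real.exp (μ*s)^2 := by
        rw [sq, ← Real.exp_add]; ring_nf
      have h := Real.sin_sq_add_cos_sq (ω*s)
      rw [normsq2, normsq2, hp']
      simp only [PiLp.add_apply, PiLp.smul_apply, smul_eq_mul, hJL0, hJL1, he2]
      linear_combination (μ^2 * Real.exp (μ*s)^2 * (L 0^2 + L 1^2)) * h
    rw [heq]; exact hd
  · rw [hS]; simp
end

section
/- Define V(x,t) = (μ/2) ‖x‖² / (1 − e^{−2μt}) for x ∈ ℝ² and t > 0. Then V satisfies the Hamilton–Jacobi equation associated with the Hamiltonian H(x,p) = ⟨p, A x⟩ + ‖p‖²: for all x ∈ ℝ² and t > 0, ∂_t V(x,t) + ⟨∇_x V(x,t), A x⟩ + ‖∇_x V(x,t)‖² = 0. -/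
open scoped RealInnerProductSpace

/-- The OU cost function solves the Hamilton–Jacobi equation.
`V(x,t) = (μ/2)‖x‖²/(1 − e^{−2μt})` satisfies
`∂_t V(x,t) + ⟨∇_x V(x,t), A x⟩ + ‖∇_x V(x,t)‖² = 0` for all `x ∈ ℝ²`, `t > 0`. -/
theorem stmt14 (μ ω : ℝ) (hμ : 0 < μ)
    (A : Matrix (Fin 2) (Fin 2) ℝ) (hA : A = !![-μ, -ω; ω, -μ])
    (V : EuclideanSpace ℝ (Fin 2) → ℝ → ℝ)
    (hV : ∀ x t, V x t = μ / 2 * ‖x‖ ^ 2 / (1 - Real.exp (-(2 * μ * t)))) :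
    ∀ (x : EuclideanSpace ℝ (Fin 2)), ∀ t : ℝ, 0 < t →
      deriv (fun s => V x s) t
        + ⟪gradient (fun y => V y t) x, Matrix.toEuclideanLin A x⟫
        + ‖gradient (fun y => V y t) x‖ ^ 2 = 0 := by
  intro x t ht
  set e := Real.exp (-(2 * μ * t)) with he
  set d := 1 - e with hd
  have he1 : e < 1 := by
    rw [he]
    apply Real.exp_lt_one_iff.mpr
    nlinarith
  have hdne : d ≠ 0 := by rw [hd]; intro h; nlinarith
  -- time derivative
  have hderiv : deriv (fun s => V x s) t = -(μ / 2 * ‖x‖ ^ 2 * (2 * μ * e)) / d ^ 2 := by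
    have hg : HasDerivAt (fun s : ℝ => 1 - Real.exp (-(2 * μ * s))) (2 * μ * e) t := by
      have h1 : HasDerivAt (fun s : ℝ => -(2 * μ * s)) (-(2 * μ)) t := by
        simpa using ((hasDerivAt_id t).const_mul (2 * μ)).fun_neg
      have h2 := (Real.hasDerivAt_exp (-(2 * μ * t))).comp t h1
      have h3 := ((hasDerivAt_const t (1 : ℝ)).sub h2)
      exact h3.congr_deriv (by rw [he]; ring)
    have hdiv := (hasDerivAt_const t (μ / 2 * ‖x‖ ^ 2)).div hg hdne
    have : HasDerivAt (fun s => V x s)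
        ((0 * d - μ / 2 * ‖x‖ ^ 2 * (2 * μ * e)) / d ^ 2) t := by
      refine HasDerivAt.congr_of_eventuallyEq hdiv ?_
      filter_upwards with s
      rw [hV]; rfl
    rw [this.deriv]; ring
  -- gradient
  have hgrad : gradient (fun y => V y t) x = (μ / d) • x := by
    apply HasGradientAt.gradient
    rw [hasGradientAt_iff_hasFDerivAt]
    have h1 : HasFDerivAt (fun y : EuclideanSpace ℝ (Fin 2) => ‖y‖ ^ 2)
        (2 • (innerSL ℝ x)) x := by
      simpa using (hasFDerivAt_id x).norm_sq
    have h2 := h1.const_mul (μ / 2 / d)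
    have heq : (fun y : EuclideanSpace ℝ (Fin 2) => V y t)
        = fun y => μ / 2 / d * ‖y‖ ^ 2 := by
      funext y; rw [hV]; ring
    rw [heq]
    refine h2.congr_fderiv ?_
    ext y
    simp [real_inner_smul_left, InnerProductSpace.toDual_apply_apply]
    ring
  rw [hderiv, hgrad]
  -- inner product term
  have hinner : ⟪x, Matrix.toEuclideanLin A x⟫ = -μ * ‖x‖ ^ 2 := by
    have hnorm : ‖x‖ ^ 2 = x 0 ^ 2 + x 1 ^ 2 := by
      rw [← real_inner_self_eq_norm_sq]
      simp only [PiLp.inner_apply, Fin.sum_univ_two, RCLike.inner_apply, conj_trivial]; ring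
    rw [hnorm]
    simp [PiLp.inner_apply, Fin.sum_univ_two, Matrix.toEuclideanLin_apply, hA,
      Matrix.mulVec, dotProduct, Fin.sum_univ_two, Matrix.vecHead, Matrix.vecTail]
    ring
  rw [real_inner_smul_left, hinner, norm_smul, mul_pow]
  have : ‖μ / d‖ ^ 2 = (μ / d) ^ 2 := by rw [Real.norm_eq_abs, sq_abs]
  rw [this]
  field_simp
  ring
end

section
/- For s, r > 0 define the 2×2 matrix U_{sr} = (2/μ)( e^{−μ|s−r|} − e^{−μ(s+r)} ) R_{s−r}. Then for all 0 < s ≤ t, the matrix U_{tt} = (2/μ)(1 − e^{−2μt}) I is invertible, and U_{st} U_{tt}^{−1} L = ((e^{μs} − e^{−μs})/(e^{μt} − e^{−μt})) R_{s−t} L; that is, the Gaussian conditional-mean matrix formula reproduces the maximum likelihood trajectory φ_{s|t}. -/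
/-- The Gaussian conditional-mean formula reproduces the MLT.
With `U_{sr} = (2/μ)(e^{−μ|s−r|} − e^{−μ(s+r)}) R_{s−r}`, for all `0 < s ≤ t`:
`U_{tt} = (2/μ)(1 − e^{−2μt}) I` is invertible and
`U_{st} U_{tt}⁻¹ L = ((e^{μs} − e^{−μs})/(e^{μt} − e^{−μt})) R_{s−t} L = φ_{s|t}`. -/
theorem stmt18 (μ ω : ℝ) (hμ : 0 < μ)
    (L : EuclideanSpace ℝ (Fin 2)) (hL : L ≠ 0)
    (R : ℝ → Matrix (Fin 2) (Fin 2) ℝ)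
    (hR : ∀ t, R t = !![Real.cos (ω * t), -Real.sin (ω * t);
                        Real.sin (ω * t), Real.cos (ω * t)])
    (U : ℝ → ℝ → Matrix (Fin 2) (Fin 2) ℝ)
    (hU : ∀ s r, U s r = (2 / μ * (Real.exp (-(μ * |s - r|)) - Real.exp (-(μ * (s + r)))))
        • R (s - r)) :
    ∀ s t : ℝ, 0 < s → s ≤ t →
      U t t = (2 / μ * (1 - Real.exp (-(2 * μ * t)))) • (1 : Matrix (Fin 2) (Fin 2) ℝ) ∧
      IsUnit (U t t) ∧
      Matrix.toEuclideanLin (U s t * (U t t)⁻¹) L =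
        ((Real.exp (μ * s) - Real.exp (-(μ * s))) /
            (Real.exp (μ * t) - Real.exp (-(μ * t)))) • Matrix.toEuclideanLin (R (s - t)) L := by
  intro s t hs hst
  have ht : 0 < t := hs.trans_le hst
  set c : ℝ := 2 / μ * (1 - Real.exp (-(2 * μ * t))) with hc
  have hexp : Real.exp (-(2 * μ * t)) < 1 := by
    rw [Real.exp_lt_one_iff]
    nlinarith
  have hcpos : 0 < c := by
    apply mul_pos (by positivity)
    linarith
  have hcne : c ≠ 0 := ne_of_gt hcpos
  have hUtt : U t t = c • (1 : Matrix (Fin 2) (Fin 2) ℝ) := by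
    rw [hU, hR]
    simp only [sub_self, abs_zero, mul_zero, mul_comm, Real.cos_zero, Real.sin_zero, neg_zero]
    rw [hc]
    congr 1
    · simp [Real.exp_zero]; ring_nf; tauto
    · ext i j
      fin_cases i <;> fin_cases j <;> simp [Matrix.one_apply]
  refine ⟨hUtt, ?_, ?_⟩
  · rw [hUtt, Matrix.isUnit_iff_isUnit_det]
    simp [Matrix.det_smul, hcne]
  · have hinv : (U t t)⁻¹ = c⁻¹ • (1 : Matrix (Fin 2) (Fin 2) ℝ) := by
      apply Matrix.inv_eq_right_inv
      rw [hUtt, Matrix.smul_mul, Matrix.mul_smul, one_mul, smul_smul,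
        mul_inv_cancel₀ hcne, one_smul]
    set d : ℝ := 2 / μ * (Real.exp (-(μ * |s - t|)) - Real.exp (-(μ * (s + t)))) with hd
    have hUst : U s t = d • R (s - t) := hU s t
    rw [hUst, hinv, Matrix.smul_mul, Matrix.mul_smul, Matrix.mul_one, smul_smul,
      map_smul, LinearMap.smul_apply]
    congr 1
    have habs : |s - t| = t - s := by
      rw [abs_of_nonpos (by linarith)]; ring
    have het : Real.exp (μ * t) - Real.exp (-(μ * t)) ≠ 0 := by
      have : Real.exp (-(μ * t)) < Real.exp (μ * t) := by
        apply Real.exp_lt_exp.mpr; nlinarith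
      linarith
    have hμne : μ ≠ 0 := ne_of_gt hμ
    rw [hd, habs]
    field_simp [hc]
    rw [hc, show μ * (2 / μ * (1 - Real.exp (-(2 * μ * t)))) = 2 * (1 - Real.exp (-(2 * μ * t))) by field_simp]
    have e1 : Real.exp (-(μ * (t - s))) = Real.exp (-(μ*t)) * Real.exp (μ*s) := by
      rw [← Real.exp_add]; ring_nf
    have e2 : Real.exp (-(μ * (s + t))) = Real.exp (-(μ*t)) * Real.exp (-(μ*s)) := by
      rw [← Real.exp_add]; ring_nf
    have e3 : Real.exp (-(2 * μ * t)) = Real.exp (-(μ*t)) * Real.exp (-(μ*t)) := by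
      rw [← Real.exp_add]; ring_nf
    have e4 : Real.exp (-(μ*t)) * Real.exp (μ*t) = 1 := by
      rw [← Real.exp_add]; simp
    rw [e1, e2, e3]
    linear_combination (2 * (Real.exp (μ*s) - Real.exp (-(μ*s)))) * e4
end
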